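/- Let $p\in(1,\infty)$, let $s$ satisfy $0<s<\frac{2}{p}$, let $\alpha\in\mathbb{R}$ and let $\omega>0$ be such that $\alpha+\frac{\gamma-\ln 2}{2\pi}+\frac{\ln\omega}{4\pi}>0$, where $\gamma$ is the Euler–Mascheroni constant. Then there exists a constant $C>0$ such that for every $\varphi\in L^p(\mathbb{R}^2)$ and every $x\in\mathbb{R}^2\setminus\{0\}$ one has $\int_0^\infty t^{-s/2}\,\frac{\left|\int_{\mathbb{R}^2}\varphi(y)\,G_{\omega+t}(y)\,dy\right|\;G_{\omega+t}(x)}{\alpha+\frac{\gamma-\ln 2}{2\pi}+\frac{\ln(\omega+t)}{4\pi}}\,dt \le C\,|x|^{\,s-\frac{2}{p}}\,\|\varphi\|_{L^p(\mathbb{R}^2)}$. (This pointwise bound is the key estimate in the proof of the two-dimensional Sobolev embedding for the perturbed Sobolev spaces.) -/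

import Mathlib

open MeasureTheory Real Filter Set
open scoped ENNReal Topology

/-- The Green function of the Helmholtz operator `ω - Δ` on `ℝ²`, defined via the
subordination formula `G_ω(x) = ∫_0^∞ e^{-ωt} e^{-|x|²/(4t)}/(4πt) dt`
(equivalently `G_ω(x) = K_0(√ω |x|)/(2π)`). -/
noncomputable def greenFn2 (ω : ℝ) (x : EuclideanSpace ℝ (Fin 2)) : ℝ :=
  ∫ t in Set.Ioi (0:ℝ), Real.exp (-ω * t) * (Real.exp (-‖x‖^2 / (4*t)) / (4 * Real.pi * t))

namespace SobolevKeyAux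

local notation "E2" => EuclideanSpace ℝ (Fin 2)

/-- The heat kernel on `ℝ²`. -/
noncomputable def hk (u : ℝ) (y : E2) : ℝ := Real.exp (-‖y‖^2 / (4*u)) / (4 * Real.pi * u)

lemma greenFn2_def (μ : ℝ) (x : E2) :
    greenFn2 μ x = ∫ u in Set.Ioi (0:ℝ), Real.exp (-μ * u) * hk u x := rfl

lemma hk_nonneg {u : ℝ} (hu : 0 < u) (y : E2) : 0 ≤ hk u y := by
  unfold hk; positivity

lemma exp_neg_le_inv {z : ℝ} (hz : 0 < z) : Real.exp (-z) ≤ z⁻¹ := by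
  rw [Real.exp_neg]
  have h1 : z ≤ Real.exp z := by linarith [Real.add_one_le_exp z]
  exact inv_anti₀ hz h1

lemma hk_le {u : ℝ} (hu : 0 < u) {x : E2} (hx : x ≠ 0) : hk u x ≤ (Real.pi * ‖x‖^2)⁻¹ := by
  have hr : 0 < ‖x‖ := norm_pos_iff.mpr hx
  have hz : 0 < ‖x‖^2 / (4*u) := by positivity
  have h1 : Real.exp (-‖x‖^2 / (4*u)) ≤ (‖x‖^2 / (4*u))⁻¹ := by
    rw [neg_div]; exact exp_neg_le_inv hz
  have h2 : hk u x ≤ (‖x‖^2 / (4*u))⁻¹ / (4 * Real.pi * u) := by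
    unfold hk
    apply div_le_div_of_nonneg_right h1 (by positivity)
  refine h2.trans (le_of_eq ?_)
  have hπ := Real.pi_pos
  field_simp

lemma greenFn2_nonneg (μ : ℝ) (x : E2) : 0 ≤ greenFn2 μ x := by
  rw [greenFn2_def]
  apply setIntegral_nonneg measurableSet_Ioi
  intro u hu
  have := hk_nonneg (mem_Ioi.mp hu) x
  positivity

lemma hk_measurable : Measurable (fun z : ℝ × E2 => hk z.1 z.2) := by
  unfold hk
  fun_prop

lemma green_integrableOn {μ : ℝ} (hμ : 0 < μ) {x : E2} (hx : x ≠ 0) :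
    IntegrableOn (fun u => Real.exp (-μ * u) * hk u x) (Set.Ioi (0:ℝ)) := by
  have hr : 0 < ‖x‖ := norm_pos_iff.mpr hx
  have hbound : IntegrableOn (fun u : ℝ => (Real.pi * ‖x‖^2)⁻¹ * Real.exp (-μ * u))
      (Set.Ioi (0:ℝ)) := (exp_neg_integrableOn_Ioi 0 hμ).const_mul _
  refine hbound.mono' ?_ ?_
  · have h1 : Measurable (fun u : ℝ => hk u x) := by unfold hk; fun_prop
    have h2 : Measurable (fun u : ℝ => Real.exp (-μ * u)) := by fun_prop
    exact (h2.mul h1).aestronglyMeasurable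
  · filter_upwards [ae_restrict_mem measurableSet_Ioi] with u hu
    have hu' : (0:ℝ) < u := hu
    have h1 : 0 ≤ Real.exp (-μ * u) * hk u x := by
      have := hk_nonneg hu' x; positivity
    rw [Real.norm_eq_abs, abs_of_nonneg h1]
    calc Real.exp (-μ * u) * hk u x ≤ Real.exp (-μ * u) * (Real.pi * ‖x‖^2)⁻¹ :=
          mul_le_mul_of_nonneg_left (hk_le hu' hx) (Real.exp_nonneg _)
      _ = (Real.pi * ‖x‖^2)⁻¹ * Real.exp (-μ * u) := by ring

lemma ofReal_green {μ : ℝ} (hμ : 0 < μ) {x : E2} (hx : x ≠ 0) :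
    ENNReal.ofReal (greenFn2 μ x)
      = ∫⁻ u in Set.Ioi (0:ℝ), ENNReal.ofReal (Real.exp (-μ * u) * hk u x) := by
  rw [greenFn2_def]
  apply ofReal_integral_eq_lintegral_ofReal (green_integrableOn hμ hx)
  filter_upwards [ae_restrict_mem measurableSet_Ioi] with u hu
  have hu' : (0:ℝ) < u := hu
  have := hk_nonneg hu' x
  positivity

lemma gamma_integrableOn {a b : ℝ} (ha : 0 < a) (hb : 0 < b) :
    IntegrableOn (fun u : ℝ => u ^ (a-1) * Real.exp (-(b*u))) (Set.Ioi (0:ℝ)) := by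
  have h0 : IntegrableOn (fun x : ℝ => Real.exp (-x) * x ^ (a-1)) (Set.Ioi (0:ℝ)) :=
    Real.GammaIntegral_convergent ha
  have h1 := (integrableOn_Ioi_comp_mul_left_iff
    (fun x : ℝ => Real.exp (-x) * x ^ (a-1)) 0 hb).mpr (by simpa using h0)
  have h2 := h1.const_mul ((b ^ (a-1))⁻¹)
  refine IntegrableOn.congr_fun h2 (fun u hu => ?_) measurableSet_Ioi
  have hu' : (0:ℝ) < u := hu
  have hbp : (0:ℝ) < b ^ (a-1) := Real.rpow_pos_of_pos hb _
  rw [Real.mul_rpow hb.le hu'.le]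
  field_simp

lemma gamma_lint {a b : ℝ} (ha : 0 < a) (hb : 0 < b) :
    ∫⁻ u in Set.Ioi (0:ℝ), ENNReal.ofReal (u ^ (a-1) * Real.exp (-(b*u)))
      = ENNReal.ofReal ((1/b) ^ a * Real.Gamma a) := by
  rw [← integral_rpow_mul_exp_neg_mul_Ioi ha hb]
  apply (ofReal_integral_eq_lintegral_ofReal (gamma_integrableOn ha hb) ?_).symm
  filter_upwards [ae_restrict_mem measurableSet_Ioi] with u hu
  have hu' : (0:ℝ) < u := hu
  positivity

lemma inv_subst {a c : ℝ} (ha : 0 < a) (hc : 0 < c) :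
    ∫⁻ u in Set.Ioi (0:ℝ), ENNReal.ofReal (Real.exp (-(c/u)) * u ^ (-a-1))
      = ENNReal.ofReal ((1/c) ^ a * Real.Gamma a) := by
  set g : ℝ → ℝ := fun y => y ^ (a-1) * Real.exp (-(c*y)) with hg_def
  have hg : IntegrableOn g (Set.Ioi (0:ℝ)) := gamma_integrableOn ha hc
  have hne : (-1 : ℝ) ≠ 0 := by norm_num
  have key : ∀ u ∈ Set.Ioi (0:ℝ),
      (|(-1:ℝ)| * u ^ ((-1:ℝ)-1)) • g (u ^ (-1:ℝ)) = Real.exp (-(c/u)) * u ^ (-a-1) := by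
    intro u hu
    have hu' : (0:ℝ) < u := hu
    have h1 : u ^ (-1:ℝ) = u⁻¹ := Real.rpow_neg_one u
    rw [hg_def]
    simp only [h1, smul_eq_mul, abs_neg, abs_one, one_mul]
    rw [Real.inv_rpow hu'.le, ← Real.rpow_neg hu'.le]
    have h2 : u ^ ((-1:ℝ)-1) * u ^ (-(a-1)) = u ^ (-a-1) := by
      rw [← Real.rpow_add hu']; ring_nf
    calc u ^ ((-1:ℝ)-1) * (u ^ (-(a-1)) * Real.exp (-(c * u⁻¹)))
        = (u ^ ((-1:ℝ)-1) * u ^ (-(a-1))) * Real.exp (-(c * u⁻¹)) := by ring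
      _ = Real.exp (-(c/u)) * u ^ (-a-1) := by
          rw [h2, div_eq_mul_inv]; ring
  have hInt : IntegrableOn (fun u : ℝ => Real.exp (-(c/u)) * u ^ (-a-1)) (Set.Ioi (0:ℝ)) := by
    have h3 := (integrableOn_Ioi_comp_rpow_iff g hne).mpr hg
    exact IntegrableOn.congr_fun h3 key measurableSet_Ioi
  rw [← ofReal_integral_eq_lintegral_ofReal hInt ?_]
  · congr 1
    rw [← setIntegral_congr_fun measurableSet_Ioi key, integral_comp_rpow_Ioi g hne, hg_def,
      integral_rpow_mul_exp_neg_mul_Ioi ha hc]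
  · filter_upwards [ae_restrict_mem measurableSet_Ioi] with u hu
    have hu' : (0:ℝ) < u := hu
    positivity

lemma gauss_integrable {b : ℝ} (hb : 0 < b) :
    Integrable (fun v : E2 => Real.exp (-b * ‖v‖^2)) := by
  have h := GaussianFourier.integrable_cexp_neg_mul_sq_norm_add (V := E2)
      (show (0:ℝ) < ((b:ℂ)).re by simpa using hb) 0 0
  simp only [zero_mul, add_zero] at h
  refine h.re.congr (Filter.Eventually.of_forall fun v => ?_)
  simp only [← Complex.ofReal_pow, ← Complex.ofReal_mul, ← Complex.ofReal_neg,
    ← Complex.ofReal_exp, Complex.ofReal_re, RCLike.re_to_complex]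

lemma gauss_integral {b : ℝ} (hb : 0 < b) :
    ∫ v : E2, Real.exp (-b * ‖v‖^2) = Real.pi / b := by
  rw [GaussianFourier.integral_rexp_neg_mul_sq_norm hb]
  norm_num [finrank_euclideanSpace_fin]

lemma hk_rpow {u q : ℝ} (hu : 0 < u) (y : E2) :
    (hk u y) ^ q = Real.exp (-(q/(4*u)) * ‖y‖^2) * ((4 * Real.pi * u) ^ q)⁻¹ := by
  unfold hk
  rw [Real.div_rpow (Real.exp_nonneg _) (by positivity), ← Real.exp_mul, div_eq_mul_inv]
  congr 2
  field_simp

lemma gauss_q_lint {u q : ℝ} (hu : 0 < u) (hq : 0 < q) :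
    ∫⁻ y : E2, (ENNReal.ofReal (hk u y)) ^ q
      = ENNReal.ofReal ((4 * Real.pi * u) ^ (1-q) / q) := by
  have hb : 0 < q / (4*u) := by positivity
  have hA : (0:ℝ) < 4 * Real.pi * u := by positivity
  have h1 : ∀ y : E2, (ENNReal.ofReal (hk u y)) ^ q = ENNReal.ofReal ((hk u y) ^ q) :=
    fun y => ENNReal.ofReal_rpow_of_nonneg (hk_nonneg hu y) hq.le
  simp_rw [h1, hk_rpow hu]
  rw [← ofReal_integral_eq_lintegral_ofReal ((gauss_integrable hb).mul_const _)
    (Filter.Eventually.of_forall fun y => by positivity)]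
  rw [integral_mul_const, gauss_integral hb]
  congr 1
  have h2 : ((4 * Real.pi * u) ^ q)⁻¹ = (4 * Real.pi * u) ^ (-q) := (Real.rpow_neg hA.le q).symm
  have h3 : Real.pi / (q / (4*u)) = (4 * Real.pi * u) / q := by field_simp
  rw [h2, h3, div_mul_eq_mul_div]
  congr 1
  nth_rewrite 1 [← Real.rpow_one (4 * Real.pi * u)]
  rw [← Real.rpow_add hA]
  norm_num
  rw [show (1:ℝ) + -q = 1 - q by ring]

lemma eLp_repr {p : ℝ} (hp : 0 < p) (φ : E2 → ℝ) :
    eLpNorm φ (ENNReal.ofReal p) volume = (∫⁻ y : E2, (ENNReal.ofReal |φ y|) ^ p) ^ (1/p) := by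
  rw [eLpNorm_eq_lintegral_rpow_enorm_toReal (ENNReal.ofReal_pos.mpr hp).ne' ENNReal.ofReal_ne_top,
    ENNReal.toReal_ofReal hp.le]
  congr 1
  refine lintegral_congr fun y => ?_
  rw [← ofReal_norm_eq_enorm, Real.norm_eq_abs]

lemma gauss_const_factor {q u : ℝ} (hq : 0 < q) (hu : 0 < u) :
    ((4*Real.pi*u) ^ (1-q) / q) ^ (1/q) = ((4*Real.pi) ^ (1-q) / q) ^ (1/q) * u ^ (1/q - 1) := by
  have h4 : (0:ℝ) < 4*Real.pi := by positivity
  rw [Real.mul_rpow h4.le hu.le, mul_div_right_comm,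
    Real.mul_rpow (by positivity) (by positivity)]
  congr 1
  rw [← Real.rpow_mul hu.le]
  congr 1
  field_simp

lemma holder_gauss {p q : ℝ} (hpq : Real.HolderConjugate p q) {φ : E2 → ℝ}
    (hφ : AEMeasurable φ volume) {u : ℝ} (hu : 0 < u) :
    ∫⁻ y : E2, ENNReal.ofReal |φ y| * ENNReal.ofReal (hk u y)
      ≤ eLpNorm φ (ENNReal.ofReal p) volume
        * ENNReal.ofReal (((4*Real.pi*u) ^ (1-q) / q) ^ (1/q)) := by
  have hq := hpq.symm.pos
  have hf : AEMeasurable (fun y : E2 => ENNReal.ofReal |φ y|) volume :=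
    (measurable_abs.comp_aemeasurable hφ).ennreal_ofReal
  have hgm : Measurable (fun y : E2 => hk u y) := by unfold hk; fun_prop
  have hg : AEMeasurable (fun y : E2 => ENNReal.ofReal (hk u y)) volume :=
    hgm.ennreal_ofReal.aemeasurable
  have h := ENNReal.lintegral_mul_le_Lp_mul_Lq volume hpq hf hg
  simp only [Pi.mul_apply] at h
  refine h.trans ?_
  rw [eLp_repr hpq.pos, gauss_q_lint hu hq]
  refine le_of_eq ?_
  congr 1
  rw [ENNReal.ofReal_rpow_of_nonneg (by positivity) (by positivity)]

set_option maxHeartbeats 1000000 in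
lemma M_bound {p q ω : ℝ} (hpq : Real.HolderConjugate p q) (hω : 0 < ω) :
    ∃ c : ℝ, 0 < c ∧ ∀ φ : E2 → ℝ, MemLp φ (ENNReal.ofReal p) volume → ∀ μ : ℝ, ω ≤ μ →
      ENNReal.ofReal |∫ y : E2, φ y * greenFn2 μ y|
        ≤ eLpNorm φ (ENNReal.ofReal p) volume * ENNReal.ofReal (c * μ ^ (-(1/q))) := by
  have hq := hpq.symm.pos
  set cg : ℝ := ((4*Real.pi) ^ (1-q) / q) ^ (1/q) with hcg_def
  have hcg : 0 < cg := by
    have : (0:ℝ) < (4*Real.pi) ^ (1-q) := Real.rpow_pos_of_pos (by positivity) _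
    positivity
  have hΓ : 0 < Real.Gamma (1/q) := Real.Gamma_pos_of_pos (by positivity)
  refine ⟨cg * Real.Gamma (1/q), by positivity, ?_⟩
  intro φ hφ μ hμ
  have hμ0 : 0 < μ := lt_of_lt_of_le hω hμ
  set N := eLpNorm φ (ENNReal.ofReal p) volume with hN
  have hNtop : N ≠ ⊤ := hφ.eLpNorm_ne_top
  have step1 : ENNReal.ofReal |∫ y : E2, φ y * greenFn2 μ y|
      ≤ ∫⁻ y : E2, ENNReal.ofReal |φ y| * ENNReal.ofReal (greenFn2 μ y) := by
    have h0 := norm_integral_le_lintegral_norm (μ := volume) (fun y : E2 => φ y * greenFn2 μ y)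
    calc ENNReal.ofReal |∫ y : E2, φ y * greenFn2 μ y|
        ≤ ENNReal.ofReal ((∫⁻ y : E2, ENNReal.ofReal ‖φ y * greenFn2 μ y‖).toReal) := by
          rw [← Real.norm_eq_abs]; exact ENNReal.ofReal_le_ofReal h0
      _ ≤ ∫⁻ y : E2, ENNReal.ofReal ‖φ y * greenFn2 μ y‖ := ENNReal.ofReal_toReal_le
      _ = _ := by
          refine lintegral_congr fun y => ?_
          rw [Real.norm_eq_abs, abs_mul, abs_of_nonneg (greenFn2_nonneg μ y),
            ENNReal.ofReal_mul (abs_nonneg _)]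
  have hae0 : ∀ᵐ y : E2 ∂volume, y ≠ 0 := by
    rw [ae_iff]
    simpa [not_not, Set.setOf_eq_eq_singleton] using measure_singleton (0 : E2)
  have m1 : Measurable (fun z : E2 × ℝ => Real.exp (-μ * z.2) * hk z.2 z.1) := by
    unfold hk; fun_prop
  have hker : AEMeasurable (Function.uncurry fun (y : E2) (u : ℝ) =>
      ENNReal.ofReal |φ y| * ENNReal.ofReal (Real.exp (-μ * u) * hk u y))
      (volume.prod (volume.restrict (Set.Ioi (0:ℝ)))) := by
    refine AEMeasurable.mul (M := ℝ≥0∞) ?_ ?_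
    · exact ((measurable_abs.comp_aemeasurable hφ.1.aemeasurable).ennreal_ofReal).comp_quasiMeasurePreserving
        Measure.quasiMeasurePreserving_fst
    · exact m1.ennreal_ofReal.aemeasurable
  have step2 : (∫⁻ y : E2, ENNReal.ofReal |φ y| * ENNReal.ofReal (greenFn2 μ y))
      = ∫⁻ u in Set.Ioi (0:ℝ), ∫⁻ y : E2,
          ENNReal.ofReal |φ y| * ENNReal.ofReal (Real.exp (-μ * u) * hk u y) := by
    rw [lintegral_congr_ae (g := fun y : E2 => ∫⁻ u in Set.Ioi (0:ℝ),
        ENNReal.ofReal |φ y| * ENNReal.ofReal (Real.exp (-μ * u) * hk u y)) ?_]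
    · exact lintegral_lintegral_swap hker
    · filter_upwards [hae0] with y hy
      rw [ofReal_green hμ0 hy, ← lintegral_const_mul' _ _ ENNReal.ofReal_ne_top]
  have step3 : (∫⁻ u in Set.Ioi (0:ℝ), ∫⁻ y : E2,
        ENNReal.ofReal |φ y| * ENNReal.ofReal (Real.exp (-μ * u) * hk u y))
      ≤ ∫⁻ u in Set.Ioi (0:ℝ),
          ENNReal.ofReal (Real.exp (-μ*u)) * (N * ENNReal.ofReal (cg * u ^ (1/q - 1))) := by
    refine lintegral_mono_ae ?_
    filter_upwards [ae_restrict_mem measurableSet_Ioi] with u hu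
    have hu' : (0:ℝ) < u := hu
    have e1 : ∀ y : E2, ENNReal.ofReal |φ y| * ENNReal.ofReal (Real.exp (-μ*u) * hk u y)
        = ENNReal.ofReal (Real.exp (-μ*u)) * (ENNReal.ofReal |φ y| * ENNReal.ofReal (hk u y)) := by
      intro y
      rw [ENNReal.ofReal_mul (Real.exp_nonneg _)]
      ring
    calc (∫⁻ y : E2, ENNReal.ofReal |φ y| * ENNReal.ofReal (Real.exp (-μ*u) * hk u y))
        = ENNReal.ofReal (Real.exp (-μ*u))
            * ∫⁻ y : E2, ENNReal.ofReal |φ y| * ENNReal.ofReal (hk u y) := by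
          simp_rw [e1]; exact lintegral_const_mul' _ _ ENNReal.ofReal_ne_top
      _ ≤ ENNReal.ofReal (Real.exp (-μ*u))
            * (N * ENNReal.ofReal (((4*Real.pi*u) ^ (1-q) / q) ^ (1/q))) :=
          mul_le_mul_right (holder_gauss hpq hφ.1.aemeasurable hu') _
      _ = ENNReal.ofReal (Real.exp (-μ*u)) * (N * ENNReal.ofReal (cg * u ^ (1/q - 1))) := by
          rw [gauss_const_factor hq hu']
  have step4 : (∫⁻ u in Set.Ioi (0:ℝ),
        ENNReal.ofReal (Real.exp (-μ*u)) * (N * ENNReal.ofReal (cg * u ^ (1/q - 1))))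
      = N * ENNReal.ofReal cg * ENNReal.ofReal ((1/μ) ^ (1/q) * Real.Gamma (1/q)) := by
    have e2 : ∀ u ∈ Set.Ioi (0:ℝ),
        ENNReal.ofReal (Real.exp (-μ*u)) * (N * ENNReal.ofReal (cg * u ^ (1/q - 1)))
        = (N * ENNReal.ofReal cg) * ENNReal.ofReal (u ^ (1/q - 1) * Real.exp (-(μ*u))) := by
      intro u hu
      have hu' : (0:ℝ) < u := hu
      rw [ENNReal.ofReal_mul hcg.le,
        ENNReal.ofReal_mul (by positivity : (0:ℝ) ≤ u ^ (1/q - 1)), neg_mul]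
      ring
    rw [setLIntegral_congr_fun measurableSet_Ioi e2,
      lintegral_const_mul' _ _ (ENNReal.mul_ne_top hNtop ENNReal.ofReal_ne_top),
      gamma_lint (by positivity : (0:ℝ) < 1/q) hμ0]
  calc ENNReal.ofReal |∫ y : E2, φ y * greenFn2 μ y|
      ≤ _ := step1
    _ = _ := step2
    _ ≤ _ := step3
    _ = N * ENNReal.ofReal cg * ENNReal.ofReal ((1/μ) ^ (1/q) * Real.Gamma (1/q)) := step4
    _ = N * ENNReal.ofReal (cg * Real.Gamma (1/q) * μ ^ (-(1/q))) := by
        rw [mul_assoc, ← ENNReal.ofReal_mul hcg.le]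
        congr 2
        rw [one_div μ, Real.inv_rpow hμ0.le, ← Real.rpow_neg hμ0.le]
        ring

set_option maxHeartbeats 1000000 in
lemma S_bound {p q s ω : ℝ} (hpq : Real.HolderConjugate p q) (hs₁ : 0 < s) (hs₂ : s < 2/p)
    (hω : 0 < ω) :
    ∃ c : ℝ, 0 < c ∧ ∀ x : E2, x ≠ 0 →
      (∫⁻ t in Set.Ioi (0:ℝ),
          ENNReal.ofReal (t ^ (-s/2) * (ω+t) ^ (-(1/q)) * greenFn2 (ω+t) x))
        ≤ ENNReal.ofReal (c * ‖x‖ ^ (s - 2/p)) := by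
  have hp1 := hpq.lt
  have hp0 := hpq.pos
  have hq0 := hpq.symm.pos
  have hinv : 1/q = 1 - 1/p := by
    have h := hpq.inv_add_inv_eq_one
    rw [one_div, one_div]
    linarith
  set a : ℝ := 1/p - s/2 with ha_def
  have ha : 0 < a := by
    have h : (2/p)/2 = 1/p := by ring
    simp only [ha_def]
    linarith
  have hΓ : 0 < Real.Gamma a := Real.Gamma_pos_of_pos ha
  refine ⟨Real.Gamma a / (4*Real.pi) * (Real.Gamma a * 4 ^ a), by positivity, ?_⟩
  intro x hx
  have hr : 0 < ‖x‖ := norm_pos_iff.mpr hx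
  have stepA : (∫⁻ t in Set.Ioi (0:ℝ),
        ENNReal.ofReal (t ^ (-s/2) * (ω+t) ^ (-(1/q)) * greenFn2 (ω+t) x))
      = ∫⁻ t in Set.Ioi (0:ℝ), ∫⁻ u in Set.Ioi (0:ℝ),
          ENNReal.ofReal (t ^ (-s/2) * (ω+t) ^ (-(1/q)) * (Real.exp (-(ω+t) * u) * hk u x)) := by
    refine setLIntegral_congr_fun measurableSet_Ioi (fun t ht => ?_)
    have ht' : (0:ℝ) < t := ht
    have hωt : (0:ℝ) < ω + t := by linarith
    have hc : (0:ℝ) ≤ t ^ (-s/2) * (ω+t) ^ (-(1/q)) := by positivity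
    rw [ENNReal.ofReal_mul hc, ofReal_green hωt hx,
      ← lintegral_const_mul' _ _ ENNReal.ofReal_ne_top]
    refine lintegral_congr fun u => ?_
    rw [← ENNReal.ofReal_mul hc]
  have mker : Measurable (Function.uncurry fun (t u : ℝ) =>
      ENNReal.ofReal (t ^ (-s/2) * (ω+t) ^ (-(1/q)) * (Real.exp (-(ω+t) * u) * hk u x))) := by
    unfold hk Function.uncurry; fun_prop
  have stepB : (∫⁻ t in Set.Ioi (0:ℝ), ∫⁻ u in Set.Ioi (0:ℝ),
        ENNReal.ofReal (t ^ (-s/2) * (ω+t) ^ (-(1/q)) * (Real.exp (-(ω+t) * u) * hk u x)))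
      = ∫⁻ u in Set.Ioi (0:ℝ), ∫⁻ t in Set.Ioi (0:ℝ),
          ENNReal.ofReal (t ^ (-s/2) * (ω+t) ^ (-(1/q)) * (Real.exp (-(ω+t) * u) * hk u x)) :=
    lintegral_lintegral_swap mker.aemeasurable
  have stepC : (∫⁻ u in Set.Ioi (0:ℝ), ∫⁻ t in Set.Ioi (0:ℝ),
        ENNReal.ofReal (t ^ (-s/2) * (ω+t) ^ (-(1/q)) * (Real.exp (-(ω+t) * u) * hk u x)))
      ≤ ∫⁻ u in Set.Ioi (0:ℝ),
          ENNReal.ofReal (hk u x) * ENNReal.ofReal ((1/u) ^ a * Real.Gamma a) := by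
    refine lintegral_mono_ae ?_
    filter_upwards [ae_restrict_mem measurableSet_Ioi] with u hu
    have hu' : (0:ℝ) < u := hu
    have pt : ∀ t ∈ Set.Ioi (0:ℝ),
        ENNReal.ofReal (t ^ (-s/2) * (ω+t) ^ (-(1/q)) * (Real.exp (-(ω+t)*u) * hk u x))
          ≤ ENNReal.ofReal (hk u x) * ENNReal.ofReal (t ^ (a-1) * Real.exp (-(u*t))) := by
      intro t ht
      have ht' : (0:ℝ) < t := ht
      rw [← ENNReal.ofReal_mul (hk_nonneg hu' x)]
      apply ENNReal.ofReal_le_ofReal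
      have h1 : (ω+t) ^ (-(1/q)) ≤ t ^ (-(1/q)) :=
        Real.rpow_le_rpow_of_nonpos ht' (by linarith)
          (neg_nonpos.mpr (by positivity : (0:ℝ) ≤ 1/q))
      have h2 : Real.exp (-(ω+t)*u) ≤ Real.exp (-(u*t)) := by
        apply Real.exp_le_exp.mpr
        nlinarith
      have h3 : t ^ (-s/2) * t ^ (-(1/q)) = t ^ (a-1) := by
        rw [← Real.rpow_add ht']
        congr 1
        rw [hinv, ha_def]
        ring
      calc t ^ (-s/2) * (ω+t) ^ (-(1/q)) * (Real.exp (-(ω+t)*u) * hk u x)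
          ≤ t ^ (-s/2) * t ^ (-(1/q)) * (Real.exp (-(u*t)) * hk u x) := by
            have h0 : (0:ℝ) ≤ hk u x := hk_nonneg hu' x
            have htp : (0:ℝ) ≤ t ^ (-s/2) := by positivity
            gcongr
        _ = hk u x * (t ^ (a-1) * Real.exp (-(u*t))) := by rw [h3]; ring
    calc (∫⁻ t in Set.Ioi (0:ℝ),
          ENNReal.ofReal (t ^ (-s/2) * (ω+t) ^ (-(1/q)) * (Real.exp (-(ω+t)*u) * hk u x)))
        ≤ ∫⁻ t in Set.Ioi (0:ℝ),
            ENNReal.ofReal (hk u x) * ENNReal.ofReal (t ^ (a-1) * Real.exp (-(u*t))) := by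
          refine lintegral_mono_ae ?_
          filter_upwards [ae_restrict_mem measurableSet_Ioi] with t ht
          exact pt t ht
      _ = ENNReal.ofReal (hk u x) * ENNReal.ofReal ((1/u) ^ a * Real.Gamma a) := by
          rw [lintegral_const_mul' _ _ ENNReal.ofReal_ne_top, gamma_lint ha hu']
  have stepD : (∫⁻ u in Set.Ioi (0:ℝ),
        ENNReal.ofReal (hk u x) * ENNReal.ofReal ((1/u) ^ a * Real.Gamma a))
      = ENNReal.ofReal (Real.Gamma a / (4*Real.pi))
          * ∫⁻ u in Set.Ioi (0:ℝ),
              ENNReal.ofReal (Real.exp (-(‖x‖^2/4 / u)) * u ^ (-a-1)) := by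
    rw [← lintegral_const_mul' _ _ ENNReal.ofReal_ne_top]
    refine setLIntegral_congr_fun measurableSet_Ioi (fun u hu => ?_)
    have hu' : (0:ℝ) < u := hu
    rw [← ENNReal.ofReal_mul (hk_nonneg hu' x), ← ENNReal.ofReal_mul (by positivity)]
    congr 1
    unfold hk
    rw [one_div, Real.inv_rpow hu'.le, ← Real.rpow_neg hu'.le,
      show -‖x‖^2/(4*u) = -(‖x‖^2/4/u) by ring]
    have h4 : u ^ (-a-1) = u ^ (-a) * u⁻¹ := by
      rw [show -a-1 = -a + (-1) by ring, Real.rpow_add hu', Real.rpow_neg_one]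
    rw [h4]
    have hπ := Real.pi_pos
    field_simp
  have hc2 : (0:ℝ) < ‖x‖^2/4 := by positivity
  have final : (1/(‖x‖^2/4)) ^ a = 4 ^ a * ‖x‖ ^ (s - 2/p) := by
    have h1 : (1:ℝ)/(‖x‖^2/4) = 4 / ‖x‖^2 := by field_simp
    rw [h1, Real.div_rpow (by norm_num) (by positivity), div_eq_mul_inv]
    congr 1
    rw [← Real.rpow_natCast ‖x‖ 2, ← Real.rpow_mul hr.le, ← Real.rpow_neg hr.le]
    congr 1
    push_cast
    simp only [ha_def]
    ring
  rw [stepA, stepB]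
  refine stepC.trans ?_
  rw [stepD, inv_subst ha hc2, final, ← ENNReal.ofReal_mul (by positivity)]
  apply ENNReal.ofReal_le_ofReal
  apply le_of_eq
  ring

end SobolevKeyAux

open SobolevKeyAux in
set_option maxHeartbeats 1000000 in
/-- Let `p ∈ (1,∞)`, `0 < s < 2/p`, `α ∈ ℝ`, `ω > 0` with
`α + (γ - ln 2)/(2π) + (ln ω)/(4π) > 0` (`γ` the Euler–Mascheroni constant). Then there is
`C > 0` such that for every `φ ∈ L^p(ℝ²)` and every `x ≠ 0`,
`∫_0^∞ t^{-s/2} |∫ φ G_{ω+t}| G_{ω+t}(x) / (α + c(ω+t)) dt ≤ C |x|^{s-2/p} ‖φ‖_{L^p}`. -/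
theorem pointwise_sobolev_key_estimate_2d (p s α ω : ℝ)
    (hp : 1 < p) (hs₁ : 0 < s) (hs₂ : s < 2/p) (hω : 0 < ω)
    (hα : 0 < α + (Real.eulerMascheroniConstant - Real.log 2) / (2 * Real.pi)
              + Real.log ω / (4 * Real.pi)) :
    ∃ C : ℝ, 0 < C ∧ ∀ φ : EuclideanSpace ℝ (Fin 2) → ℝ,
      MemLp φ (ENNReal.ofReal p) volume →
      ∀ x : EuclideanSpace ℝ (Fin 2), x ≠ 0 →
      (∫⁻ t in Set.Ioi (0:ℝ),
          ENNReal.ofReal (t ^ (-s/2)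
            * |∫ y : EuclideanSpace ℝ (Fin 2), φ y * greenFn2 (ω + t) y|
            * greenFn2 (ω + t) x
            / (α + (Real.eulerMascheroniConstant - Real.log 2) / (2 * Real.pi)
                 + Real.log (ω + t) / (4 * Real.pi))))
        ≤ ENNReal.ofReal (C * ‖x‖ ^ (s - 2/p)
            * (eLpNorm φ (ENNReal.ofReal p) volume).toReal) := by
  set q : ℝ := Real.conjExponent p with hq_def
  have hpq : Real.HolderConjugate p q := Real.HolderConjugate.conjExponent hp
  set d : ℝ := α + (Real.eulerMascheroniConstant - Real.log 2) / (2 * Real.pi)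
      + Real.log ω / (4 * Real.pi) with hd_def
  have hd : 0 < d := hα
  obtain ⟨c₁, hc₁, hM⟩ := M_bound hpq hω
  obtain ⟨c₂, hc₂, hS⟩ := S_bound hpq hs₁ hs₂ hω
  refine ⟨c₁ * d⁻¹ * c₂, by positivity, ?_⟩
  intro φ hφ x hx
  set N := eLpNorm φ (ENNReal.ofReal p) volume with hN
  have hNtop : N ≠ ⊤ := hφ.eLpNorm_ne_top
  have hNr : N = ENNReal.ofReal N.toReal := (ENNReal.ofReal_toReal hNtop).symm
  have hpt : ∀ t ∈ Set.Ioi (0:ℝ),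
      ENNReal.ofReal (t ^ (-s/2)
            * |∫ y : EuclideanSpace ℝ (Fin 2), φ y * greenFn2 (ω + t) y|
            * greenFn2 (ω + t) x
            / (α + (Real.eulerMascheroniConstant - Real.log 2) / (2 * Real.pi)
                 + Real.log (ω + t) / (4 * Real.pi)))
        ≤ (N * ENNReal.ofReal (c₁ * d⁻¹))
            * ENNReal.ofReal (t ^ (-s/2) * (ω+t) ^ (-(1/q)) * greenFn2 (ω+t) x) := by
    intro t ht
    have ht' : (0:ℝ) < t := ht
    have hωt : ω ≤ ω + t := by linarith
    have hωt0 : (0:ℝ) < ω + t := by linarith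
    have hG : 0 ≤ greenFn2 (ω+t) x := greenFn2_nonneg (ω+t) x
    have hπ := Real.pi_pos
    set I : ℝ := ∫ y : EuclideanSpace ℝ (Fin 2), φ y * greenFn2 (ω + t) y with hI
    set D : ℝ := α + (Real.eulerMascheroniConstant - Real.log 2) / (2 * Real.pi)
        + Real.log (ω + t) / (4 * Real.pi) with hD
    have hdD : d ≤ D := by
      have hlog : Real.log ω ≤ Real.log (ω + t) := by
        apply Real.log_le_log hω
        linarith
      rw [hd_def, hD]
      gcongr
    have hnum : 0 ≤ t ^ (-s/2) * |I| * greenFn2 (ω+t) x :=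
      mul_nonneg (mul_nonneg (Real.rpow_nonneg ht'.le _) (abs_nonneg _)) hG
    have hb1 : t ^ (-s/2) * |I| * greenFn2 (ω+t) x / D
        ≤ t ^ (-s/2) * |I| * greenFn2 (ω+t) x * d⁻¹ := by
      rw [div_eq_mul_inv]
      exact mul_le_mul_of_nonneg_left (inv_anti₀ hd hdD) hnum
    calc ENNReal.ofReal (t ^ (-s/2) * |I| * greenFn2 (ω+t) x / D)
        ≤ ENNReal.ofReal (t ^ (-s/2) * |I| * greenFn2 (ω+t) x * d⁻¹) :=
          ENNReal.ofReal_le_ofReal hb1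
      _ = ENNReal.ofReal |I|
            * ENNReal.ofReal (t ^ (-s/2) * greenFn2 (ω+t) x * d⁻¹) := by
          rw [← ENNReal.ofReal_mul (abs_nonneg _)]
          congr 1
          ring
      _ ≤ (N * ENNReal.ofReal (c₁ * (ω+t) ^ (-(1/q))))
            * ENNReal.ofReal (t ^ (-s/2) * greenFn2 (ω+t) x * d⁻¹) :=
          mul_le_mul_left (hM φ hφ (ω+t) hωt) _
      _ = (N * ENNReal.ofReal (c₁ * d⁻¹))
            * ENNReal.ofReal (t ^ (-s/2) * (ω+t) ^ (-(1/q)) * greenFn2 (ω+t) x) := by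
          have e : ENNReal.ofReal (c₁ * (ω+t) ^ (-(1/q)))
                * ENNReal.ofReal (t ^ (-s/2) * greenFn2 (ω+t) x * d⁻¹)
              = ENNReal.ofReal (c₁ * d⁻¹)
                * ENNReal.ofReal (t ^ (-s/2) * (ω+t) ^ (-(1/q)) * greenFn2 (ω+t) x) := by
            rw [← ENNReal.ofReal_mul (by positivity), ← ENNReal.ofReal_mul (by positivity)]
            congr 1
            ring
          conv_lhs => rw [mul_assoc]
          rw [e, ← mul_assoc]
  calc (∫⁻ t in Set.Ioi (0:ℝ),
          ENNReal.ofReal (t ^ (-s/2)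
            * |∫ y : EuclideanSpace ℝ (Fin 2), φ y * greenFn2 (ω + t) y|
            * greenFn2 (ω + t) x
            / (α + (Real.eulerMascheroniConstant - Real.log 2) / (2 * Real.pi)
                 + Real.log (ω + t) / (4 * Real.pi))))
      ≤ ∫⁻ t in Set.Ioi (0:ℝ), (N * ENNReal.ofReal (c₁ * d⁻¹))
          * ENNReal.ofReal (t ^ (-s/2) * (ω+t) ^ (-(1/q)) * greenFn2 (ω+t) x) := by
        refine lintegral_mono_ae ?_
        filter_upwards [ae_restrict_mem measurableSet_Ioi] with t ht
        exact hpt t ht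
    _ = (N * ENNReal.ofReal (c₁ * d⁻¹))
          * ∫⁻ t in Set.Ioi (0:ℝ),
              ENNReal.ofReal (t ^ (-s/2) * (ω+t) ^ (-(1/q)) * greenFn2 (ω+t) x) :=
        lintegral_const_mul' _ _ (ENNReal.mul_ne_top hNtop ENNReal.ofReal_ne_top)
    _ ≤ (N * ENNReal.ofReal (c₁ * d⁻¹)) * ENNReal.ofReal (c₂ * ‖x‖ ^ (s - 2/p)) :=
        mul_le_mul_right (hS x hx) _
    _ ≤ ENNReal.ofReal (c₁ * d⁻¹ * c₂ * ‖x‖ ^ (s - 2/p) * N.toReal) := by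
        have e2 : N * ENNReal.ofReal (c₁ * d⁻¹) * ENNReal.ofReal (c₂ * ‖x‖ ^ (s - 2/p))
            = ENNReal.ofReal (N.toReal * (c₁ * d⁻¹) * (c₂ * ‖x‖ ^ (s - 2/p))) := by
          rw [ENNReal.ofReal_mul (mul_nonneg ENNReal.toReal_nonneg (by positivity)),
            ENNReal.ofReal_mul ENNReal.toReal_nonneg, ENNReal.ofReal_toReal hNtop]
        rw [e2]
        apply ENNReal.ofReal_le_ofReal
        apply le_of_eq
        ring
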